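/- Let k be a field, k^+ its additive group, k^× its multiplicative group, and n a positive integer such that every element of k^× has an n-th root in k. Consider the semidirect product G = k^+ ⋊_φ k^× with multiplication (α_1, β_1)(α_2, β_2) = (α_1 + β_1^n α_2, β_1 β_2). Then the subgroup T = {(0, β) : β ∈ k^×} is a maximal subgroup of G: any subgroup of G properly containing T equals G. -/

import Mathlib

/-- The canonical monoid homomorphism `AddAut α →* MulAut (Multiplicative α)`. -/
def addAutToMulAut (α : Type*) [AddZeroClass α] :
    Multiplicative (AddAut α) →* MulAut (Multiplicative α) where
  toFun f := AddEquiv.toMultiplicative f.toAdd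
  map_one' := rfl
  map_mul' _ _ := rfl

/-- The action `φ : kˣ →* MulAut (Multiplicative k)`, `φ(β)(α) = β^n • α`. -/
def scalingHom (k : Type*) [Field k] (n : ℕ) : kˣ →* MulAut (Multiplicative k) :=
  ((addAutToMulAut k).comp (DistribMulAction.toAddAut kˣ k)).comp (powMonoidHom n)

lemma scalingHom_apply {k : Type*} [Field k] (n : ℕ) (β : kˣ) (a : Multiplicative k) :
    (scalingHom k n β) a = Multiplicative.ofAdd ((β : k) ^ n * a.toAdd) := by
  rfl

/-- In the semidirect product `k⁺ ⋊ kˣ` with `(α₁,β₁)(α₂,β₂) = (α₁ + β₁ⁿ α₂, β₁β₂)`,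
assuming every unit of `k` has an `n`-th root, the subgroup `T = {(0,β)}` is maximal:
any subgroup properly containing it is the whole group. -/
theorem inr_range_maximal_in_semidirectProduct
    {k : Type*} [Field k] (n : ℕ) (hn : 0 < n)
    (hroot : ∀ β : kˣ, ∃ γ : kˣ, γ ^ n = β)
    (K : Subgroup (SemidirectProduct (Multiplicative k) kˣ (scalingHom k n)))
    (hK : (SemidirectProduct.inr :
        kˣ →* SemidirectProduct (Multiplicative k) kˣ (scalingHom k n)).range < K) :
    K = ⊤ := by
  obtain ⟨g, hgK, hgT⟩ := SetLike.exists_of_lt hK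
  have hTK : ∀ β : kˣ, SemidirectProduct.inr β ∈ K := fun β =>
    hK.le ⟨β, rfl⟩
  -- g.left ≠ 1
  have hgl : (g.left : Multiplicative k) ≠ 1 := by
    intro h
    exact hgT ⟨g.right, by ext <;> simp [h]⟩
  have hgl0 : (Multiplicative.toAdd g.left : k) ≠ 0 := fun h => hgl (by
    have : g.left = Multiplicative.ofAdd 0 := by
      rw [← h]; rfl
    simpa using this)
  -- (g.left, 1) ∈ K
  have h1 : (⟨g.left, 1⟩ : SemidirectProduct (Multiplicative k) kˣ (scalingHom k n)) ∈ K := by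
    have := K.mul_mem hgK (hTK g.right⁻¹)
    convert this using 1
    ext <;> simp
  -- every (a, 1) with a ≠ 1 is in K
  have h2 : ∀ a : Multiplicative k,
      (⟨a, 1⟩ : SemidirectProduct (Multiplicative k) kˣ (scalingHom k n)) ∈ K := by
    intro a
    by_cases ha : a = 1
    · simpa [ha] using K.one_mem
    have ha0 : (Multiplicative.toAdd a : k) ≠ 0 := fun h => ha (by
      have : a = Multiplicative.ofAdd 0 := by rw [← h]; rfl
      simpa using this)
    set u : kˣ := Units.mk0 _ (div_ne_zero ha0 hgl0)
    obtain ⟨γ, hγ⟩ := hroot u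
    have := K.mul_mem (K.mul_mem (hTK γ) h1) (hTK γ⁻¹)
    convert this using 1
    ext
    · simp only [SemidirectProduct.mul_left, SemidirectProduct.mul_right,
        SemidirectProduct.left_inr, SemidirectProduct.right_inr, scalingHom_apply]
      have hγk : (γ : k) ^ n = (u : k) := by
        rw [← Units.val_pow_eq_pow_val, hγ]
      simp only [one_mul, mul_one, toAdd_one, mul_zero, ofAdd_zero, toAdd_ofAdd, hγk]
      have : (u : k) = Multiplicative.toAdd a / Multiplicative.toAdd g.left := rfl
      rw [this]
      field_simp
    · simp
  -- conclude
  ext x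
  simp only [Subgroup.mem_top, iff_true]
  have : x = (⟨x.left, 1⟩ : SemidirectProduct (Multiplicative k) kˣ (scalingHom k n)) *
      SemidirectProduct.inr x.right := by
    ext <;> simp
  rw [this]
  exact K.mul_mem (h2 x.left) (hTK x.right)
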